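/- Let H₀ and V be hermitian n×n complex matrices and set H := H₀ + V. Let I ⊆ ℝ with spectrum(H₀) ∩ I nonempty, and let P₀ := P_I(H₀) be the spectral projection of H₀ onto I. Let κ be an eigenvalue of H with eigenprojection Q_κ(H), and suppose d := min_{λ ∈ spectrum(H₀) ∩ I} |κ − λ| > 0. Then ‖Q_κ(H) · P₀‖ ≤ ‖V‖ / d. (This is the basic spectral perturbation bound ‖Q_κ P₀‖ = O(ε) for eigenvalues κ outside the gapped sector.) -/

import Mathlib

open scoped Matrix.Norms.L2Operator

/-- The orthogonal projection (as a matrix) onto the eigenspace of `H` for the (real)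
eigenvalue `κ`; it is `0` when `κ` is not an eigenvalue of `H`. -/
noncomputable def eigProj {n : Type*} [Fintype n] [DecidableEq n]
    (H : Matrix n n ℂ) (κ : ℝ) : Matrix n n ℂ :=
  Matrix.toEuclideanLin.symm
    ((Module.End.eigenspace (Matrix.toEuclideanLin H) (κ : ℂ)).subtype ∘ₗ
      (Submodule.orthogonalProjectionOnto (Module.End.eigenspace (Matrix.toEuclideanLin H) (κ : ℂ))).toLinearMap)

/-- The spectral projection of `H` onto a set `I ⊆ ℝ`, i.e. `Σ_{κ ∈ spectrum(H) ∩ I} Q_κ(H)`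
(the summands vanish off the spectrum, so the sum is finite). -/
noncomputable def specProj {n : Type*} [Fintype n] [DecidableEq n]
    (H : Matrix n n ℂ) (I : Set ℝ) : Matrix n n ℂ :=
  ∑ᶠ κ ∈ I, eigProj H κ

set_option linter.unusedSectionVars false

section Aux

variable {E : Type*} [NormedAddCommGroup E] [InnerProductSpace ℂ E]

/-- Orthogonal projection onto `U`, as an endomorphism of `E`. -/
noncomputable def projL (U : Submodule ℂ E) [Submodule.HasOrthogonalProjection U] : E →ₗ[ℂ] E :=
  U.subtype ∘ₗ (Submodule.orthogonalProjectionOnto U).toLinearMap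

lemma projL_apply (U : Submodule ℂ E) [Submodule.HasOrthogonalProjection U] (x : E) :
    projL U x = (Submodule.orthogonalProjectionOnto U x : E) := rfl

lemma projL_isSymmetric (U : Submodule ℂ E) [Submodule.HasOrthogonalProjection U] :
    (projL U).IsSymmetric := by
  have := Submodule.starProjection_isSymmetric (𝕜 := ℂ) U
  exact this

lemma projL_norm_le (U : Submodule ℂ E) [Submodule.HasOrthogonalProjection U] (x : E) :
    ‖projL U x‖ ≤ ‖x‖ := by
  rw [projL_apply]
  calc ‖(Submodule.orthogonalProjectionOnto U x : E)‖
      = ‖Submodule.orthogonalProjectionOnto U x‖ := rfl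
    _ ≤ ‖Submodule.orthogonalProjectionOnto U‖ * ‖x‖ := (Submodule.orthogonalProjectionOnto U).le_opNorm x
    _ ≤ 1 * ‖x‖ := by
        exact mul_le_mul_of_nonneg_right (Submodule.orthogonalProjectionOnto_norm_le U) (norm_nonneg x)
    _ = ‖x‖ := one_mul _

lemma inner_projL_self (U : Submodule ℂ E) [Submodule.HasOrthogonalProjection U] (x : E) :
    inner ℂ (projL U x) x = ((‖projL U x‖ : ℂ)) ^ 2 := by
  have h1 : inner ℂ (projL U x) (x - projL U x) = (0 : ℂ) :=
    Submodule.inner_right_of_mem_orthogonal (Submodule.orthogonalProjectionOnto U x).2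
      (Submodule.sub_starProjection_mem_orthogonal x)
  have h2 : (inner ℂ (projL U x) x : ℂ)
      = inner ℂ (projL U x) (projL U x) + inner ℂ (projL U x) (x - projL U x) := by
    rw [← inner_add_right]
    congr 1
    abel
  rw [h2, h1, add_zero, inner_self_eq_norm_sq_to_K]
  norm_cast

lemma bessel_sum {ι : Type*} (Gs : ι → Submodule ℂ E)
    [∀ i, Submodule.HasOrthogonalProjection (Gs i)]
    (hOF : OrthogonalFamily ℂ (fun i => ↥(Gs i)) (fun i => (Gs i).subtypeₗᵢ))
    (t : Finset ι) (x : E) :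
    ∑ i ∈ t, ‖projL (Gs i) x‖ ^ 2 ≤ ‖x‖ ^ 2 := by
  set y := ∑ i ∈ t, projL (Gs i) x with hy
  have hnorm : ‖y‖ ^ 2 = ∑ i ∈ t, ‖projL (Gs i) x‖ ^ 2 := by
    have := hOF.norm_sum (fun i => Submodule.orthogonalProjectionOnto (Gs i) x) t
    simpa [projL_apply, hy] using this
  have hinner : (inner ℂ y x : ℂ) = ((∑ i ∈ t, ‖projL (Gs i) x‖ ^ 2 : ℝ) : ℂ) := by
    rw [hy, sum_inner]
    push_cast
    exact Finset.sum_congr rfl fun i _ => inner_projL_self _ x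
  have hre : ∑ i ∈ t, ‖projL (Gs i) x‖ ^ 2 ≤ ‖y‖ * ‖x‖ := by
    calc ∑ i ∈ t, ‖projL (Gs i) x‖ ^ 2
        = Complex.re (inner ℂ y x : ℂ) := by
          rw [hinner]
          norm_cast
      _ ≤ ‖(inner ℂ y x : ℂ)‖ := Complex.re_le_norm _
      _ ≤ ‖y‖ * ‖x‖ := norm_inner_le_norm y x
  nlinarith [norm_nonneg y, norm_nonneg x, sq_nonneg (‖y‖ - ‖x‖)]

/-- `T` maps the eigenspace projection to `μ` times it. -/
lemma comp_projL_eigenspace (T : E →ₗ[ℂ] E) (μ : ℂ)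
    [Submodule.HasOrthogonalProjection (Module.End.eigenspace T μ)] :
    T ∘ₗ projL (Module.End.eigenspace T μ) = μ • projL (Module.End.eigenspace T μ) := by
  ext x
  have hmem := (Submodule.orthogonalProjectionOnto (Module.End.eigenspace T μ) x).2
  rw [Module.End.mem_eigenspace_iff] at hmem
  simpa [projL_apply] using hmem

/-- For symmetric `T` and real `μ`, also `P_μ ∘ T = μ P_μ`. -/
lemma projL_eigenspace_comp {T : E →ₗ[ℂ] E} (hT : T.IsSymmetric) (μ : ℝ)
    [Submodule.HasOrthogonalProjection (Module.End.eigenspace T (μ : ℂ))] :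
    projL (Module.End.eigenspace T (μ : ℂ)) ∘ₗ T
      = (μ : ℂ) • projL (Module.End.eigenspace T (μ : ℂ)) := by
  set P := projL (Module.End.eigenspace T (μ : ℂ)) with hP
  have hPsym : P.IsSymmetric := projL_isSymmetric _
  ext x
  apply ext_inner_right ℂ
  intro y
  have hTP : T (P y) = (μ : ℂ) • P y := by
    have := congrArg (fun f => f y) (comp_projL_eigenspace T (μ : ℂ))
    simpa using this
  calc (inner ℂ ((P ∘ₗ T) x) y : ℂ)
      = inner ℂ (T x) (P y) := hPsym (T x) y
    _ = inner ℂ x (T (P y)) := hT x (P y)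
    _ = inner ℂ x ((μ : ℂ) • P y) := by rw [hTP]
    _ = (μ : ℂ) * inner ℂ x (P y) := inner_smul_right _ _ _
    _ = (μ : ℂ) * inner ℂ (P x) y := by rw [hPsym x y]
    _ = inner ℂ (((μ : ℂ) • P) x) y := by
        rw [LinearMap.smul_apply, inner_smul_left, Complex.conj_ofReal]

end Aux

section MatrixAux

variable {n : Type*} [Fintype n] [DecidableEq n]

lemma toEuclideanLin_eigProj (H : Matrix n n ℂ) (κ : ℝ) :
    Matrix.toEuclideanLin (eigProj H κ) =
      projL (Module.End.eigenspace (Matrix.toEuclideanLin H) (κ : ℂ)) :=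
  Matrix.toEuclideanLin.apply_symm_apply _

lemma toEuclideanLin_mul (A B : Matrix n n ℂ) :
    Matrix.toEuclideanLin (A * B) =
      (Matrix.toEuclideanLin A) ∘ₗ (Matrix.toEuclideanLin B) := by
  rw [Matrix.toEuclideanLin_eq_toLin, Matrix.toLin_mul _ (PiLp.basisFun 2 ℂ n) _]

lemma l2_opNorm_le_of (A : Matrix n n ℂ) {c : ℝ} (hc : 0 ≤ c)
    (h : ∀ x : EuclideanSpace ℂ n, ‖Matrix.toEuclideanLin A x‖ ≤ c * ‖x‖) : ‖A‖ ≤ c := by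
  rw [Matrix.l2_opNorm_def]
  exact ContinuousLinearMap.opNorm_le_bound _ hc h

lemma eigProj_eq_zero {H : Matrix n n ℂ} {κ : ℝ}
    (h : ¬ Module.End.HasEigenvalue (Matrix.toEuclideanLin H) (κ : ℂ)) :
    eigProj H κ = 0 := by
  have hbot : Module.End.eigenspace (Matrix.toEuclideanLin H) (κ : ℂ) = ⊥ :=
    not_not.mp (fun h' => h (Module.End.hasEigenvalue_iff.mpr h'))
  have hzero : ((Module.End.eigenspace (Matrix.toEuclideanLin H) (κ : ℂ)).subtype ∘ₗ
      (Submodule.orthogonalProjectionOnto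
        (Module.End.eigenspace (Matrix.toEuclideanLin H) (κ : ℂ))).toLinearMap) = 0 := by
    refine LinearMap.ext fun x => ?_
    have hmem := (Submodule.orthogonalProjectionOnto
      (Module.End.eigenspace (Matrix.toEuclideanLin H) (κ : ℂ)) x).2
    have h0 := (Submodule.eq_bot_iff _).mp hbot _ hmem
    simpa using h0
  rw [eigProj, hzero, map_zero]

end MatrixAux

set_option maxHeartbeats 2000000 in
/-- Basic spectral perturbation bound: if `κ` is an eigenvalue of `H = H₀ + V` at distance at
least `d > 0` from `spectrum(H₀) ∩ I`, then `‖Q_κ(H) P_I(H₀)‖ ≤ ‖V‖ / d`. -/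
theorem eigenprojection_perturbation_bound
    {n : Type*} [Fintype n] [DecidableEq n]
    (H₀ V : Matrix n n ℂ) (hH₀ : H₀.IsHermitian) (hV : V.IsHermitian)
    (I : Set ℝ)
    (hne : ∃ lam ∈ I, Module.End.HasEigenvalue (Matrix.toEuclideanLin H₀) (lam : ℂ))
    (κ : ℝ) (hκ : Module.End.HasEigenvalue (Matrix.toEuclideanLin (H₀ + V)) (κ : ℂ))
    (d : ℝ) (hd : 0 < d)
    (hdist : ∀ lam ∈ I,
      Module.End.HasEigenvalue (Matrix.toEuclideanLin H₀) (lam : ℂ) → d ≤ |κ - lam|) :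
    ‖eigProj (H₀ + V) κ * specProj H₀ I‖ ≤ ‖V‖ / d := by
  classical
  have hT₀ : (Matrix.toEuclideanLin H₀).IsSymmetric :=
    Matrix.isHermitian_iff_isSymmetric.mp hH₀
  have hT : (Matrix.toEuclideanLin (H₀ + V)).IsSymmetric :=
    Matrix.isHermitian_iff_isSymmetric.mp (hH₀.add hV)
  -- the support of `eigProj H₀` consists of eigenvalues
  have hsupp : (Function.support fun lam : ℝ => eigProj H₀ lam) ⊆
      (fun lam : ℝ => (lam : ℂ)) ⁻¹'
        {μ : ℂ | Module.End.HasEigenvalue (Matrix.toEuclideanLin H₀) μ} := by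
    intro lam hlam
    by_contra hcon
    exact hlam (eigProj_eq_zero hcon)
  have hsuppfin : (Function.support fun lam : ℝ => eigProj H₀ lam).Finite :=
    Set.Finite.subset
      (Set.Finite.preimage Complex.ofReal_injective.injOn
        (Module.End.finite_hasEigenvalue (Matrix.toEuclideanLin H₀))) hsupp
  have hfin : (I ∩ Function.support fun lam : ℝ => eigProj H₀ lam).Finite :=
    hsuppfin.inter_of_right I
  set t : Finset ℝ := hfin.toFinset with htdef
  have htmem : ∀ lam ∈ t, lam ∈ I ∧
      Module.End.HasEigenvalue (Matrix.toEuclideanLin H₀) (lam : ℂ) := by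
    intro lam hlam
    rw [htdef, Set.Finite.mem_toFinset] at hlam
    exact ⟨hlam.1, hsupp hlam.2⟩
  have hspec : specProj H₀ I = ∑ lam ∈ t, eigProj H₀ lam := finsum_mem_eq_sum _ hfin
  set Q := eigProj (H₀ + V) κ with hQdef
  set c : ℝ → ℂ := fun lam => ((κ : ℂ) - (lam : ℂ))⁻¹ with hcdef
  set R : Matrix n n ℂ := ∑ lam ∈ t, c lam • eigProj H₀ lam with hRdef
  have hdistt : ∀ lam ∈ t, d ≤ |κ - lam| := fun lam hlam =>
    hdist lam (htmem lam hlam).1 (htmem lam hlam).2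
  have hsubne : ∀ lam ∈ t, (κ : ℂ) - (lam : ℂ) ≠ 0 := by
    intro lam hlam
    have h1 : d ≤ |κ - lam| := hdistt lam hlam
    intro hcon
    have : (((κ - lam : ℝ)) : ℂ) = 0 := by push_cast; linear_combination hcon
    have h2 : κ - lam = 0 := by exact_mod_cast this
    rw [h2] at h1
    simp at h1
    linarith
  -- key identity
  have key : ∀ lam ∈ t, Q * eigProj H₀ lam = c lam • (Q * V * eigProj H₀ lam) := by
    intro lam hlam
    have hmul : ((κ : ℂ) - (lam : ℂ)) • (Q * eigProj H₀ lam) = Q * V * eigProj H₀ lam := by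
      apply Matrix.toEuclideanLin.injective
      rw [map_smul, toEuclideanLin_mul, toEuclideanLin_mul, toEuclideanLin_mul,
        toEuclideanLin_eigProj, toEuclideanLin_eigProj]
      set Pκ := projL (Module.End.eigenspace (Matrix.toEuclideanLin (H₀ + V)) (κ : ℂ)) with hPκ
      set Pl := projL (Module.End.eigenspace (Matrix.toEuclideanLin H₀) (lam : ℂ)) with hPl
      have hVlin : Matrix.toEuclideanLin V
          = Matrix.toEuclideanLin (H₀ + V) - Matrix.toEuclideanLin H₀ := by
        rw [map_add]; abel
      have e1 : Matrix.toEuclideanLin H₀ ∘ₗ Pl = (lam : ℂ) • Pl :=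
        comp_projL_eigenspace _ _
      have e2 : Pκ ∘ₗ Matrix.toEuclideanLin (H₀ + V) = (κ : ℂ) • Pκ :=
        projL_eigenspace_comp hT κ
      calc ((κ : ℂ) - (lam : ℂ)) • (Pκ ∘ₗ Pl)
          = (κ : ℂ) • (Pκ ∘ₗ Pl) - (lam : ℂ) • (Pκ ∘ₗ Pl) := sub_smul _ _ _
        _ = ((κ : ℂ) • Pκ) ∘ₗ Pl - Pκ ∘ₗ ((lam : ℂ) • Pl) := by
            rw [LinearMap.smul_comp, LinearMap.comp_smul]
        _ = (Pκ ∘ₗ Matrix.toEuclideanLin (H₀ + V)) ∘ₗ Pl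
            - Pκ ∘ₗ (Matrix.toEuclideanLin H₀ ∘ₗ Pl) := by rw [e1, e2]
        _ = Pκ ∘ₗ Matrix.toEuclideanLin V ∘ₗ Pl := by
            rw [hVlin]
            ext x
            simp [LinearMap.sub_apply, LinearMap.comp_apply, map_sub]
    rw [← hmul, smul_smul, hcdef, inv_mul_cancel₀ (hsubne lam hlam), one_smul]
  have hQP : Q * specProj H₀ I = (Q * V) * R := by
    rw [hspec, Finset.mul_sum, hRdef, Finset.mul_sum]
    refine Finset.sum_congr rfl fun lam hlam => ?_
    rw [key lam hlam, mul_smul_comm]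
  -- norm bounds
  have hQnorm : ‖Q‖ ≤ 1 := by
    apply l2_opNorm_le_of _ zero_le_one
    intro x
    rw [hQdef, toEuclideanLin_eigProj, one_mul]
    exact projL_norm_le _ x
  have hcnorm : ∀ lam ∈ t, ‖c lam‖ ≤ d⁻¹ := by
    intro lam hlam
    have h1 : d ≤ |κ - lam| := hdistt lam hlam
    have h2 : ‖(κ : ℂ) - (lam : ℂ)‖ = |κ - lam| := by
      rw [← Complex.ofReal_sub, Complex.norm_real, Real.norm_eq_abs]
    rw [hcdef]
    simp only [norm_inv, h2]
    exact inv_anti₀ hd h1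
  have hRnorm : ‖R‖ ≤ d⁻¹ := by
    apply l2_opNorm_le_of _ (inv_nonneg.mpr hd.le)
    intro x
    have hOF := hT₀.orthogonalFamily_eigenspaces.comp Complex.ofReal_injective
    have hlin : Matrix.toEuclideanLin R x = ∑ lam ∈ t,
        c lam • projL (Module.End.eigenspace (Matrix.toEuclideanLin H₀) (lam : ℂ)) x := by
      rw [hRdef, map_sum]
      simp [toEuclideanLin_eigProj]
    have hsq : ‖Matrix.toEuclideanLin R x‖ ^ 2 ≤ (d⁻¹ * ‖x‖) ^ 2 := by
      rw [hlin]
      have hns := hOF.norm_sum (fun lam =>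
        c lam • Submodule.orthogonalProjectionOnto
          (Module.End.eigenspace (Matrix.toEuclideanLin H₀) (lam : ℂ)) x) t
      calc ‖∑ lam ∈ t,
            c lam • projL (Module.End.eigenspace (Matrix.toEuclideanLin H₀) (lam : ℂ)) x‖ ^ 2
          = ∑ lam ∈ t, ‖c lam • Submodule.orthogonalProjectionOnto
              (Module.End.eigenspace (Matrix.toEuclideanLin H₀) (lam : ℂ)) x‖ ^ 2 := by
            rw [← hns]
            exact congrArg (· ^ 2) (congrArg Norm.norm
              (Finset.sum_congr rfl fun lam _ => by simp [projL_apply]))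
        _ = ∑ lam ∈ t, ‖c lam‖ ^ 2 * ‖projL
              (Module.End.eigenspace (Matrix.toEuclideanLin H₀) (lam : ℂ)) x‖ ^ 2 := by
            refine Finset.sum_congr rfl fun lam _ => ?_
            rw [norm_smul, mul_pow]
            rfl
        _ ≤ ∑ lam ∈ t, d⁻¹ ^ 2 * ‖projL
              (Module.End.eigenspace (Matrix.toEuclideanLin H₀) (lam : ℂ)) x‖ ^ 2 := by
            refine Finset.sum_le_sum fun lam hlam => ?_
            apply mul_le_mul_of_nonneg_right _ (sq_nonneg _)
            exact pow_le_pow_left₀ (norm_nonneg _) (hcnorm lam hlam) 2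
        _ = d⁻¹ ^ 2 * ∑ lam ∈ t, ‖projL
              (Module.End.eigenspace (Matrix.toEuclideanLin H₀) (lam : ℂ)) x‖ ^ 2 := by
            rw [Finset.mul_sum]
        _ ≤ d⁻¹ ^ 2 * ‖x‖ ^ 2 := by
            apply mul_le_mul_of_nonneg_left _ (sq_nonneg _)
            exact bessel_sum _ hOF t x
        _ = (d⁻¹ * ‖x‖) ^ 2 := (mul_pow _ _ _).symm
    have hb : 0 ≤ d⁻¹ * ‖x‖ := mul_nonneg (inv_nonneg.mpr hd.le) (norm_nonneg x)
    nlinarith [norm_nonneg (Matrix.toEuclideanLin R x)]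
  -- final estimate
  have hVnonneg : (0 : ℝ) ≤ ‖V‖ := norm_nonneg _
  calc ‖Q * specProj H₀ I‖ = ‖(Q * V) * R‖ := by rw [hQP]
    _ ≤ ‖Q * V‖ * ‖R‖ := Matrix.l2_opNorm_mul _ _
    _ ≤ (‖Q‖ * ‖V‖) * ‖R‖ :=
        mul_le_mul_of_nonneg_right (Matrix.l2_opNorm_mul _ _) (norm_nonneg _)
    _ ≤ (1 * ‖V‖) * d⁻¹ := by
        apply mul_le_mul
        · exact mul_le_mul_of_nonneg_right hQnorm hVnonneg
        · exact hRnorm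
        · exact norm_nonneg _
        · positivity
    _ = ‖V‖ / d := by rw [one_mul, div_eq_mul_inv]
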